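/- Suppose each f_i is strongly convex with modulus μ_i > 0 and let μ := min_{i∈{1,…,m}} μ_i. Then the multiobjective proximal gradient method with ℓ > L generates a sequence {x^k} satisfying u_0(x^{k+1}) ≤ (1 − L/(ℓ·max{L/μ, 1}))·u_0(x^k) for all k. -/

import Mathlib

open Filter Topology

noncomputable section

/-- Convexity for extended-real-valued functions. -/
def ERealConvexOn {E : Type*} [AddCommGroup E] [Module ℝ E] (g : E → EReal) : Prop :=
  ∀ x y : E, ∀ a b : ℝ, 0 ≤ a → 0 ≤ b → a + b = 1 →
    g (a • x + b • y) ≤ (a : EReal) * g x + (b : EReal) * g y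

/-- Strong convexity (modulus σ) for extended-real-valued functions. -/
def ERealStrongConvexOn {E : Type*} [NormedAddCommGroup E] [NormedSpace ℝ E]
    (σ : ℝ) (g : E → EReal) : Prop :=
  ∀ x y : E, ∀ a b : ℝ, 0 ≤ a → 0 ≤ b → a + b = 1 →
    g (a • x + b • y) + ((σ / 2 * (a * b) * ‖x - y‖ ^ 2 : ℝ) : EReal)
      ≤ (a : EReal) * g x + (b : EReal) * g y

/-- Directional derivative (as a limit, encoded by `liminf`, of forward difference quotients). -/
def dirDeriv {E : Type*} [NormedAddCommGroup E] [NormedSpace ℝ E]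
    (φ : E → EReal) (x d : E) : EReal :=
  Filter.liminf (fun t : ℝ => ((t⁻¹ : ℝ) : EReal) * (φ (x + t • d) - φ x)) (𝓝[>] (0 : ℝ))

/-- The merit function u₀. -/
def u0 {n m : ℕ} (F : Fin m → EuclideanSpace ℝ (Fin n) → EReal)
    (x : EuclideanSpace ℝ (Fin n)) : EReal :=
  ⨆ y : EuclideanSpace ℝ (Fin n), ⨅ i, (F i x - F i y)

/-- The regularized merit function w_ℓ. -/
def wfun {n m : ℕ} (f : Fin m → EuclideanSpace ℝ (Fin n) → ℝ)
    (g : Fin m → EuclideanSpace ℝ (Fin n) → EReal) (ℓ : ℝ)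
    (x : EuclideanSpace ℝ (Fin n)) : EReal :=
  ⨆ y : EuclideanSpace ℝ (Fin n), ⨅ i,
    (((inner ℝ (gradient (f i) x) (x - y) : ℝ)) : EReal) + (g i x - g i y)
      - ((ℓ / 2 * ‖x - y‖ ^ 2 : ℝ) : EReal)

/-- The mapping ψ_x. -/
def psi {n m : ℕ} (f : Fin m → EuclideanSpace ℝ (Fin n) → ℝ)
    (g : Fin m → EuclideanSpace ℝ (Fin n) → EReal)
    (x d : EuclideanSpace ℝ (Fin n)) : EReal :=
  ⨆ i, ((inner ℝ (gradient (f i) x) d : ℝ) : EReal) + (g i (x + d) - g i x)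

section AuxLemmas

variable {E : Type*} [NormedAddCommGroup E] [InnerProductSpace ℝ E] [CompleteSpace E]

-- derivative of the line restriction
lemma line_hasDerivAt (φ : E → ℝ) (hφ : ContDiff ℝ 1 φ) (x d : E) (t : ℝ) :
    HasDerivAt (fun s : ℝ => φ (x + s • d)) (inner ℝ (gradient φ (x + t • d)) d : ℝ) t := by
  have hdiff : DifferentiableAt ℝ φ (x + t • d) := (hφ.differentiable (by norm_num)).differentiableAt
  have hg := hdiff.hasGradientAt
  have hline : HasDerivAt (fun s : ℝ => x + s • d) d t := by
    simpa using ((hasDerivAt_id t).smul_const d).const_add x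
  have := (hg.hasFDerivAt.comp_hasDerivAt t hline)
  rw [inner_gradient_left]
  simp only [toDual_gradient] at this
  exact this

lemma descent_lemma (φ : E → ℝ) (hφ : ContDiff ℝ 1 φ) (K : ℝ) (hK : 0 ≤ K)
    (hl : LipschitzWith K.toNNReal (gradient φ)) (x d : E) :
    φ (x + d) ≤ φ x + (inner ℝ (gradient φ x) d : ℝ) + K / 2 * ‖d‖ ^ 2 := by
  set h : ℝ → ℝ := fun t => φ (x + t • d) - t * (inner ℝ (gradient φ x) d : ℝ) - t ^ 2 * (K / 2 * ‖d‖ ^ 2) with hh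
  have hder : ∀ t : ℝ, HasDerivAt h ((inner ℝ (gradient φ (x + t • d)) d : ℝ) - (inner ℝ (gradient φ x) d : ℝ) - 2 * t * (K / 2 * ‖d‖ ^ 2)) t := by
    intro t
    have h1 := line_hasDerivAt φ hφ x d t
    have h2 : HasDerivAt (fun s : ℝ => s * (inner ℝ (gradient φ x) d : ℝ)) (inner ℝ (gradient φ x) d : ℝ) t := by
      simpa using (hasDerivAt_id t).mul_const (inner ℝ (gradient φ x) d : ℝ)
    have h3 : HasDerivAt (fun s : ℝ => s ^ 2 * (K / 2 * ‖d‖ ^ 2)) (2 * t * (K / 2 * ‖d‖ ^ 2)) t := by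
      simpa using ((hasDerivAt_pow 2 t).mul_const (K / 2 * ‖d‖ ^ 2))
    exact (h1.sub h2).sub h3
  have hmono : AntitoneOn h (Set.Icc (0:ℝ) 1) := by
    apply antitoneOn_of_deriv_nonpos (convex_Icc 0 1)
    · exact fun t _ => (hder t).differentiableAt.continuousAt.continuousWithinAt
    · intro t _; exact ((hder t).differentiableAt).differentiableWithinAt
    · intro t ht
      rw [interior_Icc] at ht
      rw [(hder t).deriv]
      have hlip : ‖gradient φ (x + t • d) - gradient φ x‖ ≤ K * (t * ‖d‖) := by
        have h5 := hl.dist_le_mul (x + t • d) x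
        simp only [dist_eq_norm, add_sub_cancel_left, Real.coe_toNNReal K hK] at h5
        calc ‖gradient φ (x + t • d) - gradient φ x‖ ≤ K * ‖t • d‖ := h5
          _ = K * (t * ‖d‖) := by rw [norm_smul, Real.norm_eq_abs, abs_of_pos ht.1]
      have hinner : (inner ℝ (gradient φ (x + t • d)) d : ℝ) - (inner ℝ (gradient φ x) d : ℝ) ≤ K * (t * ‖d‖) * ‖d‖ := by
        rw [← inner_sub_left]
        exact le_trans (real_inner_le_norm _ _)
          (mul_le_mul_of_nonneg_right hlip (norm_nonneg d))
      nlinarith [ht.1.le, norm_nonneg d]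
  have h10 := hmono (Set.left_mem_Icc.mpr one_pos.le) (Set.right_mem_Icc.mpr one_pos.le) one_pos.le
  simp only [hh, one_smul, zero_smul, add_zero, one_pow, one_mul, zero_mul] at h10
  norm_num at h10
  rw [inner_gradient_left]; linarith [h10]

lemma strong_convex_grad (φ : E → ℝ) (hφ : ContDiff ℝ 1 φ) (μ : ℝ)
    (hsc : StrongConvexOn Set.univ μ φ) (x y : E) :
    (inner ℝ (gradient φ x) (y - x) : ℝ) ≤ φ y - φ x - μ / 2 * ‖y - x‖ ^ 2 := by
  have hder := line_hasDerivAt φ hφ x (y - x) 0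
  simp only [zero_smul, add_zero] at hder
  have hslope : Tendsto (slope (fun s : ℝ => φ (x + s • (y - x))) 0) (𝓝[>] 0)
      (𝓝 (inner ℝ (gradient φ x) (y - x) : ℝ)) := by
    have h1 : HasDerivWithinAt (fun s : ℝ => φ (x + s • (y - x)))
        (inner ℝ (gradient φ x) (y - x) : ℝ) (Set.Ioi 0) 0 := hder.hasDerivWithinAt
    exact (hasDerivWithinAt_iff_tendsto_slope' (by simp)).mp h1
  have hbound : ∀ᶠ t : ℝ in 𝓝[>] 0,
      slope (fun s : ℝ => φ (x + s • (y - x))) 0 t ≤ φ y - φ x - (1 - t) * (μ / 2) * ‖y - x‖ ^ 2 := by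
    filter_upwards [Ioo_mem_nhdsGT one_pos] with t ht
    have ha : (0:ℝ) ≤ 1 - t := by linarith [ht.2]
    have hb : (0:ℝ) ≤ t := ht.1.le
    have hab : (1 - t) + t = 1 := by ring
    have key := hsc.2 (Set.mem_univ x) (Set.mem_univ y) ha hb hab
    have hpt : (1 - t) • x + t • y = x + t • (y - x) := by
      rw [smul_sub]; module
    rw [hpt] at key
    have hxy : ‖x - y‖ = ‖y - x‖ := norm_sub_rev x y
    rw [slope_def_field]
    have ht0 : (0:ℝ) < t := ht.1
    simp only [smul_eq_mul, hxy] at key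
    simp only [zero_smul, add_zero, sub_zero]
    rw [div_le_iff₀ ht0]
    nlinarith [key]
  -- limit on the bound
  have hlim2 : Tendsto (fun t : ℝ => φ y - φ x - (1 - t) * (μ / 2) * ‖y - x‖ ^ 2) (𝓝[>] 0)
      (𝓝 (φ y - φ x - μ / 2 * ‖y - x‖ ^ 2)) := by
    have : ContinuousAt (fun t : ℝ => φ y - φ x - (1 - t) * (μ / 2) * ‖y - x‖ ^ 2) 0 := by
      fun_prop
    simpa using this.continuousWithinAt.tendsto
  exact le_of_tendsto_of_tendsto hslope hlim2 hbound

lemma ereal_sub_ne_bot {a b : EReal} (ha : a ≠ ⊥) (hb : b ≠ ⊤) : a - b ≠ ⊥ := by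
  rw [sub_eq_add_neg, Ne, EReal.add_eq_bot_iff]
  push_neg
  exact ⟨ha, by rwa [Ne, EReal.neg_eq_bot_iff]⟩


end AuxLemmas

set_option maxHeartbeats 2000000

/-- Linear convergence of u₀ in the strongly convex case: if each fᵢ is strongly convex with
modulus μᵢ > 0 and μ := minᵢ μᵢ, then the multiobjective proximal gradient method with ℓ > L
satisfies u₀(x^{k+1}) ≤ (1 − L/(ℓ·max{L/μ, 1}))·u₀(x^k) for all k. -/
theorem proximal_gradient_rate_strongly_convex_u0
    {n m : ℕ} (hm : 0 < m)
    (f : Fin m → EuclideanSpace ℝ (Fin n) → ℝ)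
    (g : Fin m → EuclideanSpace ℝ (Fin n) → EReal)
    (hf : ∀ i, ContDiff ℝ 1 (f i))
    (hg_lsc : ∀ i, LowerSemicontinuous (g i))
    (hg_ne_bot : ∀ i x, g i x ≠ ⊥)
    (hg_proper : ∀ i, ∃ x, g i x ≠ ⊤)
    (hg_convex : ∀ i, ERealConvexOn (g i))
    (F : Fin m → EuclideanSpace ℝ (Fin n) → EReal)
    (hF : ∀ i x, F i x = (f i x : EReal) + g i x)
    (Li : Fin m → ℝ) (hLi : ∀ i, 0 < Li i)
    (hlip : ∀ i, LipschitzWith (Li i).toNNReal (gradient (f i)))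
    (L : ℝ) (hL : IsGreatest (Set.range Li) L)
    (μi : Fin m → ℝ) (hμi : ∀ i, 0 < μi i)
    (hf_sc : ∀ i, StrongConvexOn Set.univ (μi i) (f i))
    (μ : ℝ) (hμ : IsLeast (Set.range μi) μ)
    (ℓ : ℝ) (hℓ : L < ℓ)
    (x d : ℕ → EuclideanSpace ℝ (Fin n))
    (hmin : ∀ (k : ℕ) (d' : EuclideanSpace ℝ (Fin n)),
      psi f g (x k) (d k) + ((ℓ / 2 * ‖d k‖ ^ 2 : ℝ) : EReal) ≤
        psi f g (x k) d' + ((ℓ / 2 * ‖d'‖ ^ 2 : ℝ) : EReal))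
    (hstep : ∀ k, x (k + 1) = x k + d k) :
    ∀ k : ℕ, u0 F (x (k + 1)) ≤
      ((1 - L / (ℓ * max (L / μ) 1) : ℝ) : EReal) * u0 F (x k) := by
  intro k
  have _inst : Nonempty (Fin m) := ⟨⟨0, hm⟩⟩
  -- basic positivity facts
  obtain ⟨iL, hiL⟩ := hL.1
  have hL0 : 0 < L := hiL ▸ hLi iL
  obtain ⟨iμ, hiμ⟩ := hμ.1
  have hμ0 : 0 < μ := hiμ ▸ hμi iμ
  have hℓ0 : 0 < ℓ := lt_trans hL0 hℓ
  set α : ℝ := max (L / μ) 1 with hα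
  have hα1 : 1 ≤ α := le_max_right _ _
  have hα0 : 0 < α := lt_of_lt_of_le one_pos hα1
  set lam : ℝ := L / (ℓ * α) with hlam
  have hlam_pos : 0 < lam := div_pos hL0 (mul_pos hℓ0 hα0)
  have hlam_lt1 : lam < 1 := by
    rw [hlam, div_lt_one (mul_pos hℓ0 hα0)]
    nlinarith
  have hcore : ℓ * lam ≤ μ := by
    have h1 : L / μ ≤ α := le_max_left _ _
    rw [div_le_iff₀ hμ0] at h1
    have h2 : ℓ * lam = L / α := by
      rw [hlam]; field_simp
    rw [h2, div_le_iff₀ hα0]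
    linarith
  have hcoef : (1 - L / (ℓ * max (L / μ) 1) : ℝ) = 1 - lam := rfl
  rw [hcoef]
  have hcoef_pos : (0:ℝ) < 1 - lam := by linarith
  -- F is never ⊥
  have hFne_bot : ∀ i z, F i z ≠ ⊥ := by
    intro i z
    rw [hF, Ne, EReal.add_eq_bot_iff]
    push_neg
    exact ⟨EReal.coe_ne_bot _, hg_ne_bot i z⟩
  by_cases htop : u0 F (x k) = ⊤
  · rw [htop, EReal.coe_mul_top_of_pos (by exact_mod_cast hcoef_pos)]
    exact le_top
  rw [u0]
  apply iSup_le
  intro y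
  by_cases hytop : ∃ i, F i y = ⊤
  · obtain ⟨i, hi⟩ := hytop
    have hbot : F i (x (k+1)) - F i y = ⊥ := by rw [hi]; exact EReal.sub_top _
    have : (⨅ j, F j (x (k+1)) - F j y) ≤ ⊥ := hbot ▸ iInf_le _ i
    exact le_trans this bot_le
  push_neg at hytop
  -- all F i y are real
  have hFy : ∀ i, ∃ r : ℝ, F i y = (r : EReal) := by
    intro i
    lift F i y to ℝ using ⟨hytop i, hFne_bot i y⟩ with r hr
    exact ⟨r, rfl⟩
  choose Fy hFyr using hFy
  -- g i y is real
  have hgy : ∀ i, ∃ r : ℝ, g i y = (r : EReal) ∧ Fy i = f i y + r := by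
    intro i
    have h1 := hF i y
    rw [hFyr i] at h1
    lift g i y to ℝ using ⟨fun hgt => by simp [hgt, EReal.coe_add_top] at h1, hg_ne_bot i y⟩
      with r hr
    refine ⟨r, rfl, ?_⟩
    rw [← EReal.coe_add] at h1
    exact_mod_cast h1
  choose gy hgyr hgyF using hgy
  -- minimal index for B i = F i (x k) - F i y
  obtain ⟨i0, hi0⟩ := Finite.exists_min (fun i => F i (x k) - F i y)
  have hB_le_u0 : F i0 (x k) - F i0 y ≤ u0 F (x k) := by
    refine le_trans (le_iInf hi0) ?_
    exact le_iSup (fun y' => ⨅ i, F i (x k) - F i y') y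
  have hBne_top : F i0 (x k) - F i0 y ≠ ⊤ :=
    fun h => htop (top_le_iff.mp (h ▸ hB_le_u0))
  have hBne_bot : F i0 (x k) - F i0 y ≠ ⊥ :=
    ereal_sub_ne_bot (hFne_bot i0 (x k)) (hytop i0)
  obtain ⟨b, hb⟩ : ∃ b : ℝ, F i0 (x k) - F i0 y = (b : EReal) := by
    lift F i0 (x k) - F i0 y to ℝ using ⟨hBne_top, hBne_bot⟩ with b; exact ⟨b, rfl⟩
  -- u0 F (x k) is a real c with b ≤ c
  have hu0_ne_bot : u0 F (x k) ≠ ⊥ := fun h => by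
    rw [h, le_bot_iff, hb] at hB_le_u0; exact EReal.coe_ne_bot b hB_le_u0
  obtain ⟨c, hc⟩ : ∃ c : ℝ, u0 F (x k) = (c : EReal) := by
    lift u0 F (x k) to ℝ using ⟨htop, hu0_ne_bot⟩ with c; exact ⟨c, rfl⟩
  have hbc : b ≤ c := by rw [hb, hc] at hB_le_u0; exact_mod_cast hB_le_u0
  -- F i0 (x k) is real
  have hFx_ne_top : F i0 (x k) ≠ ⊤ := fun h => by
    rw [h, sub_eq_add_neg, hFyr i0] at hb
    rw [← EReal.coe_neg, EReal.top_add_coe] at hb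
    exact EReal.coe_ne_top b hb.symm
  obtain ⟨Fx0, hFx0⟩ : ∃ r : ℝ, F i0 (x k) = (r : EReal) := by
    lift F i0 (x k) to ℝ using ⟨hFx_ne_top, hFne_bot i0 (x k)⟩ with r; exact ⟨r, rfl⟩
  have hbval : b = Fx0 - Fy i0 := by
    rw [hFx0, hFyr i0, ← EReal.coe_sub] at hb
    exact_mod_cast hb.symm
  -- g i0 (x k) is real
  obtain ⟨r0, hr0, hr0F⟩ : ∃ r : ℝ, g i0 (x k) = (r : EReal) ∧ Fx0 = f i0 (x k) + r := by
    have h1 := hF i0 (x k)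
    rw [hFx0] at h1
    lift g i0 (x k) to ℝ using
      ⟨fun hgt => by simp [hgt, EReal.coe_add_top] at h1, hg_ne_bot i0 (x k)⟩ with r hr
    refine ⟨r, rfl, ?_⟩
    rw [← EReal.coe_add] at h1
    exact_mod_cast h1
  -- geometric setup
  set s : ℝ := ‖y - x k‖ ^ 2 with hs
  have hs0 : 0 ≤ s := sq_nonneg _
  set d' : EuclideanSpace ℝ (Fin n) := lam • (y - x k) with hd'
  have hd'norm : ℓ / 2 * ‖d'‖ ^ 2 = ℓ / 2 * lam ^ 2 * s := by
    rw [hd', norm_smul, Real.norm_eq_abs, abs_of_pos hlam_pos, mul_pow]; ring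
  have hpt : (1 - lam) • (x k) + lam • y = x k + d' := by
    rw [hd', smul_sub]; module
  -- Step 1 : F i0 (x (k+1)) ≤ Fx0 + (psi (d k) + ℓ/2 ‖d k‖²)
  have hT : F i0 (x (k+1)) ≤ (Fx0 : EReal) +
      (psi f g (x k) (d k) + ((ℓ / 2 * ‖d k‖ ^ 2 : ℝ) : EReal)) := by
    have hterm : ((inner ℝ (gradient (f i0) (x k)) (d k) : ℝ) : EReal)
        + (g i0 (x k + d k) - g i0 (x k)) ≤ psi f g (x k) (d k) :=
      le_iSup (fun i => ((inner ℝ (gradient (f i) (x k)) (d k) : ℝ) : EReal)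
        + (g i (x k + d k) - g i (x k))) i0
    by_cases hGtop : g i0 (x k + d k) = ⊤
    · have h2 : psi f g (x k) (d k) = ⊤ := by
        refine top_le_iff.mp (le_trans ?_ hterm)
        rw [hGtop, hr0, EReal.top_sub_coe, EReal.coe_add_top]
      rw [h2, EReal.top_add_coe, EReal.coe_add_top]
      exact le_top
    · obtain ⟨G, hG⟩ : ∃ G : ℝ, g i0 (x k + d k) = (G : EReal) := by
        lift g i0 (x k + d k) to ℝ using ⟨hGtop, hg_ne_bot i0 _⟩ with G hG
        exact ⟨G, rfl⟩
      have hdesc : f i0 (x k + d k) ≤ f i0 (x k)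
          + (inner ℝ (gradient (f i0) (x k)) (d k) : ℝ) + ℓ / 2 * ‖d k‖ ^ 2 := by
        have h3 := descent_lemma (f i0) (hf i0) (Li i0) (hLi i0).le (hlip i0) (x k) (d k)
        have h4 : Li i0 / 2 * ‖d k‖ ^ 2 ≤ ℓ / 2 * ‖d k‖ ^ 2 := by
          have := hL.2 ⟨i0, rfl⟩
          nlinarith [sq_nonneg ‖d k‖]
        linarith
      have h5 : F i0 (x (k+1)) = ((f i0 (x k + d k) + G : ℝ) : EReal) := by
        rw [hstep k, hF i0, hG, ← EReal.coe_add]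
      rw [h5]
      calc ((f i0 (x k + d k) + G : ℝ) : EReal)
          ≤ ((Fx0 + ((inner ℝ (gradient (f i0) (x k)) (d k) : ℝ) + (G - r0))
              + ℓ / 2 * ‖d k‖ ^ 2 : ℝ) : EReal) := by
            rw [EReal.coe_le_coe_iff, hr0F]; linarith
        _ = (Fx0 : EReal) + ((((inner ℝ (gradient (f i0) (x k)) (d k) : ℝ) : EReal)
              + (g i0 (x k + d k) - g i0 (x k))) + ((ℓ / 2 * ‖d k‖ ^ 2 : ℝ) : EReal)) := by
            rw [hG, hr0, ← EReal.coe_sub, ← EReal.coe_add, ← EReal.coe_add, ← EReal.coe_add]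
            norm_cast
            ring
        _ ≤ (Fx0 : EReal) + (psi f g (x k) (d k) + ((ℓ / 2 * ‖d k‖ ^ 2 : ℝ) : EReal)) := by
            exact add_le_add_right (add_le_add_left hterm _) _
  -- Step 2 : use the minimality of d k
  have hT2 : F i0 (x (k+1)) ≤ (Fx0 : EReal) +
      (psi f g (x k) d' + ((ℓ / 2 * ‖d'‖ ^ 2 : ℝ) : EReal)) :=
    le_trans hT (add_le_add_right (hmin k d') _)
  -- Step 3 : bound psi at d'
  have hpsi : psi f g (x k) d' ≤ ((-(lam * b) - lam * (μ / 2) * s : ℝ) : EReal) := by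
    apply iSup_le
    intro i
    by_cases hgi : g i (x k) = ⊤
    · rw [hgi, EReal.sub_top, EReal.add_bot]
      exact bot_le
    · obtain ⟨ri, hri⟩ : ∃ r : ℝ, g i (x k) = (r : EReal) := by
        lift g i (x k) to ℝ using ⟨hgi, hg_ne_bot i _⟩ with r hr
        exact ⟨r, rfl⟩
      -- b ≤ B i as reals
      have hBi : f i y + gy i - (f i (x k) + ri) ≤ -b := by
        have h6 := hi0 i
        rw [hb, hF i (x k), hri, ← EReal.coe_add, hFyr i, ← EReal.coe_sub] at h6
        have h7 : b ≤ f i (x k) + ri - Fy i := by exact_mod_cast h6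
        rw [hgyF i] at h7
        linarith
      -- convexity of g i
      have hcv := hg_convex i (x k) y (1 - lam) lam (by linarith) hlam_pos.le (by ring)
      rw [hpt, hri, hgyr i, ← EReal.coe_mul, ← EReal.coe_mul, ← EReal.coe_add] at hcv
      have hGne_top : g i (x k + d') ≠ ⊤ := fun h => by
        rw [h] at hcv
        exact EReal.coe_ne_top _ (top_le_iff.mp hcv)
      obtain ⟨c', hc'⟩ : ∃ r : ℝ, g i (x k + d') = (r : EReal) := by
        lift g i (x k + d') to ℝ using ⟨hGne_top, hg_ne_bot i _⟩ with r hr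
        exact ⟨r, rfl⟩
      rw [hc'] at hcv
      have hc'le : c' ≤ (1 - lam) * ri + lam * gy i := by exact_mod_cast hcv
      -- strong convexity of f i
      have hsc := strong_convex_grad (f i) (hf i) (μi i) (hf_sc i) (x k) y
      have hμle : μ ≤ μi i := hμ.2 ⟨i, rfl⟩
      have hinner : (inner ℝ (gradient (f i) (x k)) d' : ℝ)
          = lam * (inner ℝ (gradient (f i) (x k)) (y - x k) : ℝ) := by
        rw [hd', real_inner_smul_right]
      rw [hri, hc', ← EReal.coe_sub, ← EReal.coe_add, EReal.coe_le_coe_iff, hinner]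
      have hsc2 : (inner ℝ (gradient (f i) (x k)) (y - x k) : ℝ)
          ≤ f i y - f i (x k) - μ / 2 * ‖y - x k‖ ^ 2 := by
        nlinarith [hsc, hμle, sq_nonneg ‖y - x k‖]
      have e1 : lam * (inner ℝ (gradient (f i) (x k)) (y - x k) : ℝ)
          ≤ lam * (f i y - f i (x k) - μ / 2 * ‖y - x k‖ ^ 2) :=
        mul_le_mul_of_nonneg_left hsc2 hlam_pos.le
      have e2 : lam * (f i y + gy i - (f i (x k) + ri)) ≤ lam * (-b) :=
        mul_le_mul_of_nonneg_left hBi hlam_pos.le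
      rw [hs]
      nlinarith [e1, e2, hc'le]
  -- Step 4 : combine
  have hsum : psi f g (x k) d' + ((ℓ / 2 * ‖d'‖ ^ 2 : ℝ) : EReal)
      ≤ ((-(lam * b) : ℝ) : EReal) := by
    calc psi f g (x k) d' + ((ℓ / 2 * ‖d'‖ ^ 2 : ℝ) : EReal)
        ≤ ((-(lam * b) - lam * (μ / 2) * s : ℝ) : EReal) + ((ℓ / 2 * ‖d'‖ ^ 2 : ℝ) : EReal) :=
          add_le_add_left hpsi _
      _ = ((-(lam * b) - lam * (μ / 2) * s + ℓ / 2 * lam ^ 2 * s : ℝ) : EReal) := by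
          rw [← EReal.coe_add, hd'norm]
      _ ≤ ((-(lam * b) : ℝ) : EReal) := by
          rw [EReal.coe_le_coe_iff]
          nlinarith [mul_nonneg (mul_nonneg hlam_pos.le hs0) (sub_nonneg.mpr hcore)]
  have hA : F i0 (x (k+1)) ≤ ((Fx0 - lam * b : ℝ) : EReal) := by
    refine le_trans hT2 ?_
    calc (Fx0 : EReal) + (psi f g (x k) d' + ((ℓ / 2 * ‖d'‖ ^ 2 : ℝ) : EReal))
        ≤ (Fx0 : EReal) + ((-(lam * b) : ℝ) : EReal) := add_le_add_right hsum _
      _ = ((Fx0 - lam * b : ℝ) : EReal) := by rw [← EReal.coe_add]; norm_num [sub_eq_add_neg]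
  have hAy : F i0 (x (k+1)) - F i0 y ≤ (((1 - lam) * b : ℝ) : EReal) := by
    have h9 := add_le_add_left hA (-(Fy i0 : EReal))
    rw [hFyr i0, sub_eq_add_neg]
    refine le_trans h9 ?_
    rw [← EReal.coe_neg, ← EReal.coe_add, EReal.coe_le_coe_iff, hbval]
    ring_nf
    exact le_rfl
  refine le_trans (iInf_le _ i0) (le_trans hAy ?_)
  rw [hc, ← EReal.coe_mul, EReal.coe_le_coe_iff]
  nlinarith [hbc]
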